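/- Let R be a commutative ring and B an R-algebra such that B/R is a Frobenius extension with system (E, X_k, Y_k), k = 1,…,m. Then M_n(B)/R is a Frobenius extension with Frobenius homomorphism E′(b) = E(trace(b)) and dual bases X′ = X_k e_{i,j}, Y′ = Y_k e_{j,i} (indexed over all triples (i,j,k)). -/

import Mathlib

/-- If `B/R` is a Frobenius extension with system `(E, X_k, Y_k)`, then `M_n(B)/R` is a
Frobenius extension with Frobenius homomorphism `E′(b) = E(trace(b))` and dual bases
`X_k e_{i,j}`, `Y_k e_{j,i}` indexed over all triples `(i,j,k)`. -/
theorem stmt_13 (R B : Type*) [CommRing R] [Ring B] [Algebra R B] (n m : ℕ)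
    (E : B →ₗ[R] R) (X Y : Fin m → B)
    (hFrob : ∀ b : B,
      (∑ k : Fin m, E (b * X k) • Y k = b) ∧ (∑ k : Fin m, E (Y k * b) • X k = b)) :
    ∀ b : Matrix (Fin n) (Fin n) B,
      (∑ i : Fin n, ∑ j : Fin n, ∑ k : Fin m,
          E (Matrix.trace (b * Matrix.single i j (X k))) •
            Matrix.single j i (Y k) = b) ∧
      (∑ i : Fin n, ∑ j : Fin n, ∑ k : Fin m,
          E (Matrix.trace (Matrix.single j i (Y k) * b)) •
            Matrix.single i j (X k) = b) := by
  intro b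
  constructor <;> ext p q <;>
    simp only [Matrix.sum_apply, Matrix.smul_apply, Matrix.trace, Matrix.diag,
      Matrix.mul_apply, Matrix.single, Matrix.of_apply, mul_ite, ite_mul,
      mul_zero, zero_mul, mul_one, one_mul, ite_and, Finset.sum_ite_eq, Finset.sum_ite_eq',
      Finset.mem_univ, if_true, smul_ite, smul_zero, Finset.sum_ite_irrel, Finset.sum_const_zero]
  · exact (hFrob (b p q)).1
  · exact (hFrob (b p q)).2
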